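/- Security of authentication with an ε-AXU₂ family, one-time-pad encrypted tags and key recycling: let M be a finite type, B = Fin b_H → ZMod 2, and F a nonempty finite ε-AXU₂ family of functions M → B, i.e., for all m₁ ≠ m₂ in M and all b ∈ B, |{f ∈ F : f(m₁) + f(m₂) = b}| ≤ ε·|F|. Fix n ≥ 1, messages m₁, …, m_n ∈ M, a forged message m' ∈ M with m' ≠ m₁, and an arbitrary adversary strategy G : Bⁿ → B. Then the number of keys (f, r₁, …, r_n) ∈ F × Bⁿ such that f(m') + r₁ = G(f(m₁)+r₁, …, f(m_n)+r_n) is at most ε·|F|·2^{n·b_H}; equivalently, the probability over a uniformly random key that the adversary's guessed tag for the substituted message m' (in place of m₁) is correct is at most ε. -/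

import Mathlib

/-- Security of authentication with an ε-AXU₂ family, one-time-pad encrypted
tags and key recycling: any deterministic substitution strategy for the first
message succeeds for at most ε·|F|·2^{n·b_H} of the keys
(f, r₁, …, r_n) ∈ F × Bⁿ, i.e., with probability at most ε over a uniform key. -/
theorem axu2_otp_authentication_security {M : Type*} [Fintype M] (bH : ℕ) (hbH : 0 < bH)
    (F : Finset (M → (Fin bH → ZMod 2))) (hF : F.Nonempty) (ε : ℝ)
    (hAXU : ∀ m₁ m₂ : M, m₁ ≠ m₂ → ∀ b : Fin bH → ZMod 2,
      ((F.filter (fun f => f m₁ + f m₂ = b)).card : ℝ) ≤ ε * F.card)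
    (n : ℕ) (hn : 0 < n) (m : Fin n → M) (m' : M) (hm' : m' ≠ m ⟨0, hn⟩)
    (G : (Fin n → (Fin bH → ZMod 2)) → (Fin bH → ZMod 2)) :
    (((F ×ˢ (Finset.univ : Finset (Fin n → (Fin bH → ZMod 2)))).filter
        (fun p => p.1 m' + p.2 ⟨0, hn⟩ =
          G (fun i => p.1 (m i) + p.2 i))).card : ℝ)
      ≤ ε * F.card * 2 ^ (n * bH) := by
  classical
  have key : ∀ a : Fin bH → ZMod 2, a + a = 0 := fun a =>
    funext fun i => CharTwo.add_self_eq_zero _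
  set z : Fin n := ⟨0, hn⟩
  set S := ((F ×ˢ (Finset.univ : Finset (Fin n → (Fin bH → ZMod 2)))).filter
        (fun p => p.1 m' + p.2 z = G (fun i => p.1 (m i) + p.2 i))) with hS
  set T := ((F ×ˢ (Finset.univ : Finset (Fin n → (Fin bH → ZMod 2)))).filter
        (fun p => p.1 m' + p.1 (m z) = G p.2 + p.2 z)) with hT
  have hcard : S.card = T.card := by
    apply Finset.card_bij (fun p _ => (p.1, fun i => p.1 (m i) + p.2 i))
    · intro p hp
      simp only [hS, Finset.mem_filter, Finset.mem_product, Finset.mem_univ] at hp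
      obtain ⟨⟨hp1, -⟩, hp2⟩ := hp
      simp only [hT, Finset.mem_filter, Finset.mem_product, Finset.mem_univ]
      refine ⟨⟨hp1, trivial⟩, ?_⟩
      rw [← hp2]
      abel_nf
      rw [two_smul, key, add_zero]
    · intro p hp q hq hpq
      simp only [Prod.mk.injEq] at hpq
      obtain ⟨h1, h2⟩ := hpq
      have : p.2 = q.2 := by
        funext i
        have := congrFun h2 i
        rw [h1] at this
        exact add_left_cancel this
      exact Prod.ext h1 this
    · intro p hp
      simp only [hT, Finset.mem_filter, Finset.mem_product, Finset.mem_univ] at hp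
      obtain ⟨⟨hp1, -⟩, hp2⟩ := hp
      refine ⟨(p.1, fun i => p.1 (m i) + p.2 i), ?_, ?_⟩
      · simp only [hS, Finset.mem_filter, Finset.mem_product, Finset.mem_univ]
        refine ⟨⟨hp1, trivial⟩, ?_⟩
        have : (fun i => p.1 (m i) + (p.1 (m i) + p.2 i)) = p.2 := by
          funext i
          rw [← add_assoc, key, zero_add]
        rw [this, ← add_assoc, hp2, add_assoc, key, add_zero]
      · ext i j <;> simp [← add_assoc, CharTwo.add_self_eq_zero]
  have hfib : (T.card : ℝ) ≤ (2 : ℝ) ^ (n * bH) * (ε * F.card) := by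
    have hsum : T.card = ∑ t : Fin n → Fin bH → ZMod 2,
        (T.filter (fun p => p.2 = t)).card := by
      apply Finset.card_eq_sum_card_fiberwise
      intro p _; exact Finset.mem_univ _
    rw [hsum]
    push_cast
    have hstep : ∀ t ∈ (Finset.univ : Finset (Fin n → Fin bH → ZMod 2)),
        ((T.filter (fun p => p.2 = t)).card : ℝ) ≤ ε * F.card := by
          intro t _
          have hinj : ((T.filter (fun p => p.2 = t)).card : ℝ) ≤
              ((F.filter (fun f => f m' + f (m z) = G t + t z)).card : ℝ) := by
            norm_cast
            apply Finset.card_le_card_of_injOn (fun p => p.1)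
            · intro p hp
              simp only [hT, Finset.mem_coe, Finset.mem_filter, Finset.mem_product, Finset.mem_univ] at hp
              obtain ⟨⟨⟨h1, -⟩, h2⟩, h3⟩ := hp
              subst h3
              exact Finset.mem_filter.2 ⟨h1, h2⟩
            · intro p hp q hq hpq
              simp only [Finset.coe_filter, Set.mem_setOf_eq] at hp hq
              exact Prod.ext hpq (hp.2.trans hq.2.symm)
          exact hinj.trans (hAXU m' (m z) hm' _)
    calc (∑ t : Fin n → Fin bH → ZMod 2, ((T.filter (fun p => p.2 = t)).card : ℝ))
        ≤ ∑ _t : Fin n → Fin bH → ZMod 2, ε * F.card := Finset.sum_le_sum hstep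
      _ = (2 : ℝ) ^ (n * bH) * (ε * F.card) := by
          rw [Finset.sum_const, Finset.card_univ, nsmul_eq_mul]
          have : Fintype.card (Fin n → Fin bH → ZMod 2) = 2 ^ (n * bH) := by
            simp only [Fintype.card_fun, Fintype.card_fin, ZMod.card]
            rw [mul_comm n bH, pow_mul]
          rw [this]
          push_cast
          ring
  calc (S.card : ℝ) = T.card := by rw [hcard]
    _ ≤ (2 : ℝ) ^ (n * bH) * (ε * F.card) := hfib
    _ = ε * F.card * 2 ^ (n * bH) := by ring
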